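/- The Jacobian of the revised rigid body vector field (8) at the equilibrium (m,0,0) has characteristic polynomial λ(λ² − a₁(a₂+a₃−2a₁)m²λ + (a₁−a₃)(a₁−a₂)m²(a₁²m²+1)). -/

import Mathlib

open Matrix

theorem revised_rigid_body_jacobian_at_M1 (a₁ a₂ a₃ m : ℝ) :
    let X : (Fin 3 → ℝ) → (Fin 3 → ℝ) := fun x =>
      ![(a₂ - a₃) * x 1 * x 2 + a₂ * (a₁ - a₂) * x 0 * (x 1)^2
          + a₃ * (a₁ - a₃) * x 0 * (x 2)^2,
        (a₃ - a₁) * x 0 * x 2 + a₃ * (a₂ - a₃) * x 1 * (x 2)^2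
          + a₁ * (a₂ - a₁) * x 1 * (x 0)^2,
        (a₁ - a₂) * x 0 * x 1 + a₁ * (a₃ - a₁) * x 2 * (x 0)^2
          + a₂ * (a₃ - a₂) * x 2 * (x 1)^2]
    let J : Matrix (Fin 3) (Fin 3) ℝ :=
      Matrix.of fun i j => fderiv ℝ (fun x => X x i) ![m, 0, 0] (Pi.single j 1)
    ∀ lam : ℝ, (lam • (1 : Matrix (Fin 3) (Fin 3) ℝ) - J).det
      = lam * (lam^2 - a₁ * (a₂ + a₃ - 2 * a₁) * m^2 * lam
          + (a₁ - a₃) * (a₁ - a₂) * m^2 * (a₁^2 * m^2 + 1)) := by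
  intro X J lam
  have h0 : HasFDerivAt (fun x : Fin 3 → ℝ => x 0)
      (ContinuousLinearMap.proj (R := ℝ) (φ := fun _ : Fin 3 => ℝ) 0) ![m, 0, 0] :=
    hasFDerivAt_apply 0 _
  have h1 : HasFDerivAt (fun x : Fin 3 → ℝ => x 1)
      (ContinuousLinearMap.proj (R := ℝ) (φ := fun _ : Fin 3 => ℝ) 1) ![m, 0, 0] :=
    hasFDerivAt_apply 1 _
  have h2 : HasFDerivAt (fun x : Fin 3 → ℝ => x 2)
      (ContinuousLinearMap.proj (R := ℝ) (φ := fun _ : Fin 3 => ℝ) 2) ![m, 0, 0] :=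
    hasFDerivAt_apply 2 _
  have hF0 := (((h1.const_mul (a₂ - a₃)).mul h2).add
      ((h0.const_mul (a₂ * (a₁ - a₂))).mul (h1.mul h1))).add
      ((h0.const_mul (a₃ * (a₁ - a₃))).mul (h2.mul h2))
  have hF1 := (((h0.const_mul (a₃ - a₁)).mul h2).add
      ((h1.const_mul (a₃ * (a₂ - a₃))).mul (h2.mul h2))).add
      ((h1.const_mul (a₁ * (a₂ - a₁))).mul (h0.mul h0))
  have hF2 := (((h0.const_mul (a₁ - a₂)).mul h1).add
      ((h2.const_mul (a₁ * (a₃ - a₁))).mul (h0.mul h0))).add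
      ((h2.const_mul (a₂ * (a₃ - a₂))).mul (h1.mul h1))
  have e0 : (fun x => X x 0) = fun x : Fin 3 → ℝ =>
      (a₂ - a₃) * x 1 * x 2 + a₂ * (a₁ - a₂) * x 0 * (x 1 * x 1)
        + a₃ * (a₁ - a₃) * x 0 * (x 2 * x 2) := by
    funext x; simp [X]; ring
  have e1 : (fun x => X x 1) = fun x : Fin 3 → ℝ =>
      (a₃ - a₁) * x 0 * x 2 + a₃ * (a₂ - a₃) * x 1 * (x 2 * x 2)
        + a₁ * (a₂ - a₁) * x 1 * (x 0 * x 0) := by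
    funext x; simp [X]; ring
  have e2 : (fun x => X x 2) = fun x : Fin 3 → ℝ =>
      (a₁ - a₂) * x 0 * x 1 + a₁ * (a₃ - a₁) * x 2 * (x 0 * x 0)
        + a₂ * (a₃ - a₂) * x 2 * (x 1 * x 1) := by
    funext x; simp [X]; ring
  have d0 := (hF0.congr_of_eventuallyEq (Filter.Eventually.of_forall fun x => congrFun e0 x)).fderiv
  have d1 := (hF1.congr_of_eventuallyEq (Filter.Eventually.of_forall fun x => congrFun e1 x)).fderiv
  have d2 := (hF2.congr_of_eventuallyEq (Filter.Eventually.of_forall fun x => congrFun e2 x)).fderiv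
  rw [det_fin_three]
  simp only [Matrix.sub_apply, Matrix.smul_apply, Matrix.one_apply, Matrix.of_apply, J,
    smul_eq_mul]
  rw [d0, d1, d2]
  simp [ContinuousLinearMap.add_apply, ContinuousLinearMap.smul_apply,
    ContinuousLinearMap.proj_apply, Pi.single_apply, smul_eq_mul]
  ring
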